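/- arXiv:1611.10258 — 3 statements merged into one kernel-verified Lean document; each statement's English description precedes it below -/
import Mathlib

section
/- There exists a constant C > 0 such that for every ε ∈ (0,1) there is a univariate real polynomial p of degree at most C/ε satisfying |max(0, x) − p(x)| ≤ ε for all x ∈ [−1, 1], and additionally p(x) ∈ [0, 1] for all x ∈ [−1, 1]. -/
open Real Polynomial Finset intervalIntegral

noncomputable section ReluApprox

lemma chebT_natDegree_le (m : ℕ) : (Polynomial.Chebyshev.T ℝ (m:ℤ)).natDegree ≤ m := by
  induction m using Nat.strong_induction_on with
  | _ m ih =>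
    match m with
    | 0 => simp [Polynomial.Chebyshev.T_zero]
    | 1 => simp [Polynomial.Chebyshev.T_one, natDegree_X_le]
    | (k+2) =>
      have h : Polynomial.Chebyshev.T ℝ ((k:ℤ)+2) =
          2 * X * Polynomial.Chebyshev.T ℝ ((k:ℤ)+1) - Polynomial.Chebyshev.T ℝ (k:ℤ) :=
        Polynomial.Chebyshev.T_add_two ℝ (k:ℤ)
      have h1 := ih (k+1) (by omega)
      have h0 := ih k (by omega)
      push_cast
      rw [h]
      refine le_trans (natDegree_sub_le _ _) ?_
      have : (2 * X * Polynomial.Chebyshev.T ℝ ((k:ℤ)+1)).natDegree ≤ k + 2 := by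
        refine le_trans (natDegree_mul_le) ?_
        have : (2 * X : ℝ[X]).natDegree ≤ 1 := by
          refine le_trans (natDegree_mul_le) ?_
          simp [natDegree_X_le]
        push_cast at h1
        omega
      push_cast at h0 ⊢
      omega

lemma tele_sum (n : ℕ) : ∑ k ∈ Finset.range n, (1:ℝ)/((2*k+1)*(2*k+3)) = n/(2*n+1) := by
  induction n with
  | zero => simp
  | succ n ih =>
    rw [Finset.sum_range_succ, ih]
    have h1 : (2*(n:ℝ)+1) ≠ 0 := by positivity
    have h2 : (2*(n:ℝ)+3) ≠ 0 := by positivity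
    have h3 : (2*((n:ℝ)+1)+1) ≠ 0 := by positivity
    push_cast
    field_simp
    ring

lemma int_pow_weight (k : ℕ) :
    ∫ t in (0:ℝ)..1, (1 - t^2) * t^(2*k) = 2/((2*(k:ℝ)+1)*(2*(k:ℝ)+3)) := by
  have h : ∀ t : ℝ, (1 - t^2) * t^(2*k) = t^(2*k) - t^(2*k+2) := by intro t; ring
  simp_rw [h]
  rw [intervalIntegral.integral_sub (intervalIntegrable_pow _) (intervalIntegrable_pow _),
    integral_pow, integral_pow]
  have h1 : (2*(k:ℝ)+1) ≠ 0 := by positivity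
  have h2 : (2*(k:ℝ)+3) ≠ 0 := by positivity
  push_cast
  field_simp
  ring_nf

lemma int_main (c s : ℝ) (hc : 0 < c) (hs : 0 ≤ s) (hcs : c^2 + s^2 = 1) :
    ∫ t in (0:ℝ)..1, (1 - t^2) * (2*c^2 - 1 + t^2) / ((1+t^2)^2 - 4*s^2*t^2)
      = π/2 * c - 1 := by
  have hs1 : s < 1 := by nlinarith
  have hq1 : ∀ t : ℝ, 0 < (t-s)^2 + c^2 := fun t => by positivity
  have hq2 : ∀ t : ℝ, 0 < (t+s)^2 + c^2 := fun t => by positivity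
  have hD : ∀ t : ℝ, (1+t^2)^2 - 4*s^2*t^2 = ((t-s)^2 + c^2) * ((t+s)^2 + c^2) := by
    intro t; linear_combination (-(c^2+s^2+1+2*t^2)) * hcs
  have hDpos : ∀ t : ℝ, 0 < (1+t^2)^2 - 4*s^2*t^2 := by
    intro t; rw [hD t]; exact mul_pos (hq1 t) (hq2 t)
  -- the simplified form of the integrand
  have hsimp : ∀ t : ℝ, (1 - t^2) * (2*c^2 - 1 + t^2) / ((1+t^2)^2 - 4*s^2*t^2)
      = -1 + c^2/((t-s)^2 + c^2) + c^2/((t+s)^2 + c^2) := by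
    intro t
    have h1 := (hq1 t).ne'
    have h2 := (hq2 t).ne'
    rw [hD t]
    have hnum : (1 - t^2) * (2*c^2 - 1 + t^2)
        = (-( ((t-s)^2 + c^2) * ((t+s)^2 + c^2) ) + c^2*((t+s)^2+c^2) + c^2*((t-s)^2+c^2)) := by
      linear_combination (s^2 - c^2 + 1 - 2*t^2) * hcs
    rw [hnum]
    field_simp
  -- antiderivative
  set F : ℝ → ℝ := fun t => -t + c * arctan ((t-s)/c) + c * arctan ((t+s)/c) with hF
  have hderiv : ∀ t ∈ Set.uIcc (0:ℝ) 1, HasDerivAt F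
      ((1 - t^2) * (2*c^2 - 1 + t^2) / ((1+t^2)^2 - 4*s^2*t^2)) t := by
    intro t _
    rw [hsimp t]
    have h1 : HasDerivAt (fun t : ℝ => (t-s)/c) (1/c) t := by
      simpa using ((hasDerivAt_id t).sub_const s).div_const c
    have h2 : HasDerivAt (fun t : ℝ => (t+s)/c) (1/c) t := by
      simpa using ((hasDerivAt_id t).add_const s).div_const c
    have a1 : HasDerivAt (fun t : ℝ => arctan ((t-s)/c))
        ((1 / (1 + ((t-s)/c)^2)) * (1/c)) t := (Real.hasDerivAt_arctan _).comp t h1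
    have a2 : HasDerivAt (fun t : ℝ => arctan ((t+s)/c))
        ((1 / (1 + ((t+s)/c)^2)) * (1/c)) t := (Real.hasDerivAt_arctan _).comp t h2
    have := ((hasDerivAt_id t).neg.add ((a1.const_mul c))).add ((a2.const_mul c))
    convert this using 1
    · rfl
    · rfl
    · rfl
    have hc' : c ≠ 0 := ne_of_gt hc
    have e1 : 1 + ((t-s)/c)^2 ≠ 0 := by positivity
    have e2 : 1 + ((t+s)/c)^2 ≠ 0 := by positivity
    field_simp
    ring
  have hcont : IntervalIntegrable
      (fun t : ℝ => (1 - t^2) * (2*c^2 - 1 + t^2) / ((1+t^2)^2 - 4*s^2*t^2))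
      MeasureTheory.volume 0 1 := by
    apply Continuous.intervalIntegrable
    apply Continuous.div (by continuity) (by continuity)
    exact fun t => ne_of_gt (hDpos t)
  rw [intervalIntegral.integral_eq_sub_of_hasDerivAt hderiv hcont]
  have hc' : c ≠ 0 := ne_of_gt hc
  have key : arctan ((1-s)/c) + arctan ((1+s)/c) = π/2 := by
    have hpos : 0 < (1-s)/c := div_pos (by linarith) hc
    have hinv : ((1-s)/c)⁻¹ = (1+s)/c := by
      rw [inv_div]
      rw [div_eq_div_iff (by linarith) hc']
      nlinarith
    rw [← hinv, Real.arctan_inv_of_pos hpos]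
    ring
  simp only [hF]
  rw [show (0:ℝ) - s = -s by ring, show (0:ℝ) + s = s by ring,
    show ((-s)/c) = -(s/c) by ring, Real.arctan_neg]
  linear_combination c * key

lemma rem_formula (θ t : ℝ) (hD : (1+t^2)^2 - 4*(sin θ)^2*t^2 ≠ 0) (n : ℕ) :
    (1-t^2)*(2*(cos θ)^2-1+t^2)/((1+t^2)^2 - 4*(sin θ)^2*t^2)
      - ∑ k ∈ Finset.range n, ((-1):ℝ)^k * (1-t^2) * t^(2*k) * cos ((2*(k:ℝ)+2)*θ)
    = (-1)^n * t^(2*n) * (1-t^2) * (cos ((2*(n:ℝ)+2)*θ) + t^2*cos ((2*(n:ℝ))*θ))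
       / ((1+t^2)^2 - 4*(sin θ)^2*t^2) := by
  induction n with
  | zero =>
    simp only [Finset.range_zero, Finset.sum_empty, sub_zero, Nat.cast_zero, pow_zero,
      mul_zero, zero_mul, Real.cos_zero]
    rw [show ((0:ℝ)+2)*θ = 2*θ by ring, Real.cos_two_mul]
    ring
  | succ n ih =>
    rw [Finset.sum_range_succ, ← sub_sub, ih]
    have e1 : cos ((2*((n:ℝ)+1)+2)*θ)
        = cos ((2*(n:ℝ)+2)*θ) * cos (2*θ) - sin ((2*(n:ℝ)+2)*θ) * sin (2*θ) := by
      rw [← Real.cos_add]; congr 1; ring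
    have e2 : cos ((2*(n:ℝ))*θ)
        = cos ((2*(n:ℝ)+2)*θ) * cos (2*θ) + sin ((2*(n:ℝ)+2)*θ) * sin (2*θ) := by
      rw [← Real.cos_sub]; congr 1; ring
    have e4 : cos ((2*((n:ℝ)+1))*θ) = cos ((2*(n:ℝ)+2)*θ) := by congr 1; ring
    have e3 : cos (2*θ) = 1 - 2*(sin θ)^2 := by
      rw [Real.cos_two_mul]
      have := Real.sin_sq_add_cos_sq θ
      linarith
    push_cast
    rw [e1, e2, e4, e3]
    rw [eq_div_iff hD, sub_mul, div_mul_cancel₀ _ hD]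
    ring

lemma rem_bound (θ t : ℝ) (hc : 0 < cos θ) (ht0 : 0 ≤ t) (ht1 : t ≤ 1) (n : ℕ) :
    |(-1:ℝ)^n * t^(2*n) * (1-t^2) * (cos ((2*(n:ℝ)+2)*θ) + t^2*cos ((2*(n:ℝ))*θ))
       / ((1+t^2)^2 - 4*(sin θ)^2*t^2)| ≤ t^(2*n) := by
  set a := cos ((2*(n:ℝ)+2)*θ) with ha
  set b := cos ((2*(n:ℝ))*θ) with hb
  set D := (1+t^2)^2 - 4*(sin θ)^2*t^2 with hDdef
  have hpy := Real.sin_sq_add_cos_sq θ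
  have hDeq : D = (1-t^2)^2 + 4*t^2*(cos θ)^2 := by
    rw [hDdef]; linear_combination (-(4*t^2))*hpy
  have hDpos : 0 < D := by
    rcases eq_or_ne t 0 with h | h
    · rw [hDeq, h]; norm_num
    · have : 0 < 4*t^2*(cos θ)^2 := by positivity
      nlinarith [sq_nonneg (1-t^2)]
  have h1 : (1-t^2)^2 ≤ D := by nlinarith [sq_nonneg (t*cos θ)]
  have ec : a * b + sin ((2*(n:ℝ)+2)*θ) * sin ((2*(n:ℝ))*θ) = cos (2*θ) := by
    rw [ha, hb, ← Real.cos_sub]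
    congr 1; ring
  have e3 : cos (2*θ) = 1 - 2*(sin θ)^2 := by
    rw [Real.cos_two_mul]; linarith
  have h2 : (a + t^2*b)^2 ≤ D := by
    nlinarith [sq_nonneg (sin ((2*(n:ℝ)+2)*θ) + t^2 * sin ((2*(n:ℝ))*θ)),
      Real.sin_sq_add_cos_sq ((2*(n:ℝ)+2)*θ), Real.sin_sq_add_cos_sq ((2*(n:ℝ))*θ), ec, e3]
  have hw : (1-t^2) * |a + t^2*b| ≤ D := by
    have hsq : ((1-t^2) * |a + t^2*b|)^2 ≤ D^2 := by
      have : ((1-t^2) * |a + t^2*b|)^2 = (1-t^2)^2 * (a+t^2*b)^2 := by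
        rw [mul_pow, sq_abs]
      rw [this]
      nlinarith [sq_nonneg (a+t^2*b), sq_nonneg (1-t^2)]
    nlinarith [mul_nonneg (by nlinarith : (0:ℝ) ≤ 1-t^2) (abs_nonneg (a+t^2*b))]
  rw [abs_div, abs_mul, abs_mul, abs_mul, abs_pow, abs_pow, abs_neg, abs_one, one_pow,
    one_mul, abs_of_nonneg ht0, abs_of_nonneg (by nlinarith : (0:ℝ) ≤ 1-t^2),
    abs_of_pos hDpos]
  rw [div_le_iff₀ hDpos]
  calc t^(2*n) * (1-t^2) * |a + t^2*b| = t^(2*n) * ((1-t^2) * |a + t^2*b|) := by ring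
    _ ≤ t^(2*n) * D := by
        apply mul_le_mul_of_nonneg_left hw (by positivity)

noncomputable def chebSum (n : ℕ) (θ : ℝ) : ℝ :=
  2/π + ∑ k ∈ Finset.range n,
    (4/π) * ((-1)^k/((2*(k:ℝ)+1)*(2*(k:ℝ)+3))) * cos ((2*(k:ℝ)+2)*θ)

lemma cheb_est_lt (n : ℕ) (θ : ℝ) (h0 : 0 ≤ θ) (h1 : θ < π/2) :
    |cos θ - chebSum n θ| ≤ 2/π * (1/(2*(n:ℝ)+1)) := by
  have hπ : (0:ℝ) < π := Real.pi_pos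
  have hc : 0 < cos θ := Real.cos_pos_of_mem_Ioo ⟨by linarith, h1⟩
  have hsnn : 0 ≤ sin θ := Real.sin_nonneg_of_nonneg_of_le_pi h0 (by linarith)
  have hcs : (cos θ)^2 + (sin θ)^2 = 1 := by
    have := Real.sin_sq_add_cos_sq θ; linarith
  set c := cos θ with hcdef
  set s := sin θ with hsdef
  set f : ℝ → ℝ := fun t => (1-t^2)*(2*c^2-1+t^2)/((1+t^2)^2 - 4*s^2*t^2) with hf
  set g : ℕ → ℝ → ℝ :=
    fun k t => ((-1):ℝ)^k * (1-t^2) * t^(2*k) * cos ((2*(k:ℝ)+2)*θ) with hg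
  have hDpos : ∀ t : ℝ, 0 < (1+t^2)^2 - 4*s^2*t^2 := by
    intro t
    have he : (1+t^2)^2 - 4*s^2*t^2 = (1-t^2)^2 + 4*t^2*c^2 := by
      linear_combination (-(4*t^2))*hcs
    rw [he]
    rcases eq_or_ne t 0 with h | h
    · rw [h]; norm_num
    · have : 0 < 4*t^2*c^2 := by positivity
      nlinarith [sq_nonneg (1-t^2)]
  have hfc : Continuous f := by
    apply Continuous.div (by fun_prop) (by fun_prop) (fun t => (hDpos t).ne')
  have hfi : IntervalIntegrable f MeasureTheory.volume 0 1 :=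
    hfc.intervalIntegrable _ _
  have hgc : ∀ k, Continuous (g k) := fun k => by fun_prop
  have hgsc : Continuous (fun t => ∑ k ∈ Finset.range n, g k t) := by
    apply continuous_finset_sum
    exact fun k _ => hgc k
  have hgsi : IntervalIntegrable (fun t => ∑ k ∈ Finset.range n, g k t)
      MeasureTheory.volume 0 1 := hgsc.intervalIntegrable _ _
  have hIg : ∀ k : ℕ, ∫ t in (0:ℝ)..1, g k t
      = (4/π) * ((-1)^k/((2*(k:ℝ)+1)*(2*(k:ℝ)+3))) * cos ((2*(k:ℝ)+2)*θ) * (π/2) := by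
    intro k
    have : ∀ t : ℝ, g k t = (((-1):ℝ)^k * cos ((2*(k:ℝ)+2)*θ)) * ((1-t^2)*t^(2*k)) := by
      intro t; rw [hg]; ring
    rw [intervalIntegral.integral_congr (fun t _ => this t),
      intervalIntegral.integral_const_mul, int_pow_weight k]
    have d1 : (2*(k:ℝ)+1) ≠ 0 := by positivity
    have d2 : (2*(k:ℝ)+3) ≠ 0 := by positivity
    field_simp
    ring
  have hint : ∫ t in (0:ℝ)..1, (f t - ∑ k ∈ Finset.range n, g k t)
      = (π/2*c - 1) - ∑ k ∈ Finset.range n,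
        (4/π) * ((-1)^k/((2*(k:ℝ)+1)*(2*(k:ℝ)+3))) * cos ((2*(k:ℝ)+2)*θ) * (π/2) := by
    rw [intervalIntegral.integral_sub hfi hgsi,
      intervalIntegral.integral_finset_sum (fun k _ => (hgc k).intervalIntegrable _ _)]
    rw [int_main c s hc hsnn hcs]
    congr 1
    exact Finset.sum_congr rfl (fun k _ => hIg k)
  have key : cos θ - chebSum n θ
      = 2/π * ∫ t in (0:ℝ)..1, (f t - ∑ k ∈ Finset.range n, g k t) := by
    rw [hint, chebSum, mul_sub, Finset.mul_sum]
    rw [show 2/π * (π/2*c - 1) = c - 2/π by field_simp]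
    have : ∀ k ∈ Finset.range n,
        2/π * ((4/π) * ((-1)^k/((2*(k:ℝ)+1)*(2*(k:ℝ)+3))) * cos ((2*(k:ℝ)+2)*θ) * (π/2))
        = (4/π) * ((-1)^k/((2*(k:ℝ)+1)*(2*(k:ℝ)+3))) * cos ((2*(k:ℝ)+2)*θ) := by
      intro k _
      field_simp
    rw [Finset.sum_congr rfl this]
    ring
  rw [key]
  have habs : |∫ t in (0:ℝ)..1, (f t - ∑ k ∈ Finset.range n, g k t)|
      ≤ 1/(2*(n:ℝ)+1) := by
    calc |∫ t in (0:ℝ)..1, (f t - ∑ k ∈ Finset.range n, g k t)|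
        ≤ ∫ t in (0:ℝ)..1, |f t - ∑ k ∈ Finset.range n, g k t| :=
          intervalIntegral.abs_integral_le_integral_abs (by norm_num)
      _ ≤ ∫ t in (0:ℝ)..1, t^(2*n) := by
          apply intervalIntegral.integral_mono_on (by norm_num)
          · exact ((hfc.sub hgsc).abs).intervalIntegrable _ _
          · exact intervalIntegrable_pow _
          · intro t ht
            rw [show f t - ∑ k ∈ Finset.range n, g k t
              = (-1)^n * t^(2*n) * (1-t^2) * (cos ((2*(n:ℝ)+2)*θ) + t^2*cos ((2*(n:ℝ))*θ))
                / ((1+t^2)^2 - 4*s^2*t^2) from rem_formula θ t (hDpos t).ne' n]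
            exact rem_bound θ t hc ht.1 ht.2 n
      _ = 1/(2*(n:ℝ)+1) := by
          rw [integral_pow]
          push_cast
          norm_num
  rw [abs_mul, abs_of_nonneg (by positivity : (0:ℝ) ≤ 2/π)]
  exact mul_le_mul_of_nonneg_left habs (by positivity)

lemma cos_succ_pi (k : ℕ) : cos ((2*(k:ℝ)+2)*(π/2)) = (-1)^(k+1) := by
  have := Real.cos_nat_mul_pi_sub 0 (k+1)
  rw [Real.cos_zero, sub_zero, mul_one] at this
  rw [show (2*(k:ℝ)+2)*(π/2) = ((k:ℝ)+1)*π by ring]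
  rw [show ((k:ℝ)+1) = (((k+1:ℕ)):ℝ) by push_cast; ring]
  exact this

lemma cheb_est_pi2 (n : ℕ) :
    |cos (π/2) - chebSum n (π/2)| ≤ 2/π * (1/(2*(n:ℝ)+1)) := by
  have hπ : (0:ℝ) < π := Real.pi_pos
  have hS : chebSum n (π/2) = 2/π * (1/(2*(n:ℝ)+1)) := by
    rw [chebSum]
    have h1 : ∀ k ∈ Finset.range n,
        (4/π) * ((-1:ℝ)^k/((2*(k:ℝ)+1)*(2*(k:ℝ)+3))) * cos ((2*(k:ℝ)+2)*(π/2))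
        = -(4/π) * ((1:ℝ)/((2*(k:ℝ)+1)*(2*(k:ℝ)+3))) := by
      intro k _
      rw [cos_succ_pi k]
      have hkk : ((-1:ℝ))^k * (-1)^(k+1) = -1 := by
        rw [← pow_add]
        exact Odd.neg_one_pow ⟨k, by ring⟩
      linear_combination ((4/π)*(1/((2*(k:ℝ)+1)*(2*(k:ℝ)+3)))) * hkk
    rw [Finset.sum_congr rfl h1]
    have h2 : ∑ k ∈ Finset.range n, -(4/π) * ((1:ℝ)/((2*(k:ℝ)+1)*(2*(k:ℝ)+3)))
        = -(4/π) * ((n:ℝ)/(2*(n:ℝ)+1)) := by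
      rw [← Finset.mul_sum, tele_sum n]
    rw [h2]
    have hd : (2*(n:ℝ)+1) ≠ 0 := by positivity
    field_simp
    ring
  rw [hS, Real.cos_pi_div_two, zero_sub, abs_neg,
    abs_of_nonneg (by positivity : (0:ℝ) ≤ 2/π * (1/(2*(n:ℝ)+1)))]



lemma cheb_est_all (n : ℕ) (θ : ℝ) (h0 : 0 ≤ θ) (h1 : θ ≤ π) :
    |(|cos θ|) - chebSum n θ| ≤ 2/π * (1/(2*(n:ℝ)+1)) := by
  rcases lt_trichotomy θ (π/2) with h | h | h
  · rw [abs_of_nonneg (Real.cos_nonneg_of_mem_Icc ⟨by linarith, le_of_lt h⟩)]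
    exact cheb_est_lt n θ h0 h
  · have := cheb_est_pi2 n
    rw [h, Real.cos_pi_div_two, abs_zero]
    rwa [Real.cos_pi_div_two] at this
  · have hθ1 : 0 ≤ π - θ := by linarith
    have hθ2 : π - θ < π/2 := by linarith
    have hcneg : cos θ ≤ 0 := Real.cos_nonpos_of_pi_div_two_le_of_le (le_of_lt h)
      (by linarith [Real.pi_pos])
    have hcs : |cos θ| = cos (π - θ) := by
      rw [Real.cos_pi_sub, abs_of_nonpos hcneg]
    have hSeq : chebSum n (π - θ) = chebSum n θ := by
      unfold chebSum
      congr 1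
      apply Finset.sum_congr rfl
      intro k _
      congr 1
      rw [show (2*(k:ℝ)+2)*(π-θ) = ((k:ℝ)+1)*(2*π) - (2*(k:ℝ)+2)*θ by ring]
      rw [show ((k:ℝ)+1) = (((k+1 : ℤ)):ℝ) by push_cast; ring]
      exact Real.cos_int_mul_two_pi_sub _ _
    rw [hcs, ← hSeq]
    exact cheb_est_lt n (π - θ) hθ1 hθ2

noncomputable def chebPoly (n : ℕ) : Polynomial ℝ :=
  Polynomial.C (2/π) + ∑ k ∈ Finset.range n,
    Polynomial.C ((4/π) * ((-1)^k/((2*(k:ℝ)+1)*(2*(k:ℝ)+3))))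
      * Polynomial.Chebyshev.T ℝ (2*(k:ℤ)+2)

lemma chebPoly_eval (n : ℕ) (x : ℝ) (hx1 : -1 ≤ x) (hx2 : x ≤ 1) :
    (chebPoly n).eval x = chebSum n (Real.arccos x) := by
  have hx : cos (Real.arccos x) = x := Real.cos_arccos hx1 hx2
  rw [chebPoly, chebSum]
  rw [eval_add, eval_C, eval_finset_sum]
  congr 1
  apply Finset.sum_congr rfl
  intro k _
  rw [eval_mul, eval_C]
  congr 1
  conv_lhs => rw [← hx]
  rw [Polynomial.Chebyshev.T_real_cos]
  congr 1
  push_cast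
  ring

lemma chebPoly_natDegree (n : ℕ) : (chebPoly n).natDegree ≤ 2*n := by
  rw [chebPoly]
  refine le_trans (natDegree_add_le _ _) (max_le (by simp) ?_)
  apply Polynomial.natDegree_sum_le_of_forall_le
  intro k hk
  refine le_trans (natDegree_mul_le) ?_
  rw [natDegree_C, zero_add]
  rw [show (2*(k:ℤ)+2) = ((2*k+2 : ℕ) : ℤ) by push_cast; ring]
  refine le_trans (chebT_natDegree_le (2*k+2)) ?_
  have := Finset.mem_range.mp hk
  omega

lemma cheb_abs_est (n : ℕ) (x : ℝ) (hx1 : -1 ≤ x) (hx2 : x ≤ 1) :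
    |(|x|) - (chebPoly n).eval x| ≤ 2/π * (1/(2*(n:ℝ)+1)) := by
  have h1 : 0 ≤ Real.arccos x := Real.arccos_nonneg x
  have h2 : Real.arccos x ≤ π := Real.arccos_le_pi x
  have hx : cos (Real.arccos x) = x := Real.cos_arccos hx1 hx2
  have h := cheb_est_all n (Real.arccos x) h1 h2
  rw [hx] at h
  rwa [chebPoly_eval n x hx1 hx2]

lemma cheb_exists (n : ℕ) : ∃ P : Polynomial ℝ, P.natDegree ≤ 2*n ∧
    ∀ x : ℝ, -1 ≤ x → x ≤ 1 → |(|x|) - P.eval x| ≤ 2/π*(1/(2*(n:ℝ)+1)) :=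
  ⟨chebPoly n, chebPoly_natDegree n, fun x h1 h2 => cheb_abs_est n x h1 h2⟩

end ReluApprox

/-- There exists a constant `C > 0` such that for every `ε ∈ (0,1)` there is a
univariate real polynomial `p` of degree at most `C/ε` satisfying
`|max 0 x − p(x)| ≤ ε` for all `x ∈ [−1, 1]`, and moreover `p(x) ∈ [0, 1]` for
all `x ∈ [−1, 1]`. -/
theorem relu_poly_approx :
    ∃ C : ℝ, 0 < C ∧ ∀ ε : ℝ, ε ∈ Set.Ioo (0 : ℝ) 1 →
      ∃ p : Polynomial ℝ, (p.natDegree : ℝ) ≤ C / ε ∧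
        ∀ x ∈ Set.Icc (-1 : ℝ) 1,
          |max 0 x - p.eval x| ≤ ε ∧ p.eval x ∈ Set.Icc (0 : ℝ) 1 := by
  refine ⟨4, by norm_num, ?_⟩
  rintro ε ⟨hε0, hε1⟩
  set n : ℕ := ⌈1/ε⌉₊ with hn
  have hnge : 1/ε ≤ (n:ℝ) := Nat.le_ceil _
  have hnle : (n:ℝ) < 1/ε + 1 := Nat.ceil_lt_add_one (by positivity)
  have hn1 : 1 ≤ n := Nat.one_le_iff_ne_zero.mpr (by
    intro h
    rw [h] at hnge
    norm_num at hnge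
    have : 0 < 1/ε := by positivity
    linarith)
  obtain ⟨P, hdeg, hest⟩ := cheb_exists n
  have hπ : (0:ℝ) < π := Real.pi_pos
  have h2π : (2:ℝ) ≤ π := Real.two_le_pi
  have herr : 2/π*(1/(2*(n:ℝ)+1)) ≤ ε/2 := by
    have h2n : 2/ε ≤ 2*(n:ℝ)+1 := by
      have : 2*(1/ε) ≤ 2*(n:ℝ) := by linarith
      rw [show (2:ℝ)/ε = 2*(1/ε) by ring]
      linarith
    have hd : (0:ℝ) < 2*(n:ℝ)+1 := by positivity
    have h1 : 1/(2*(n:ℝ)+1) ≤ ε/2 := by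
      rw [div_le_div_iff₀ hd (by norm_num)]
      nlinarith [(div_le_iff₀ hε0).mp h2n]
    have h2 : 2/π ≤ 1 := by
      rw [div_le_one hπ]; linarith
    have h3 : (0:ℝ) ≤ 1/(2*(n:ℝ)+1) := by positivity
    nlinarith
  set q : Polynomial ℝ := Polynomial.C (1/(1+ε/2)) *
    (Polynomial.C (ε/4) + Polynomial.C (1/2) * (Polynomial.X + P)) with hq
  refine ⟨q, ?_, ?_⟩
  · -- degree bound
    have hdq : q.natDegree ≤ 2*n := by
      rw [hq]
      refine le_trans (natDegree_mul_le) ?_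
      rw [natDegree_C, zero_add]
      refine le_trans (natDegree_add_le _ _) (max_le (by simp) ?_)
      refine le_trans (natDegree_mul_le) ?_
      rw [natDegree_C, zero_add]
      refine le_trans (natDegree_add_le _ _) (max_le ?_ hdeg)
      · rw [natDegree_X]; omega
    have hcast : (q.natDegree : ℝ) ≤ 2*(n:ℝ) := by exact_mod_cast hdq
    have h5 : (2:ℝ) ≤ 2/ε := by
      rw [le_div_iff₀ hε0]; nlinarith
    have e1 : (2:ℝ)*(1/ε) = 2/ε := by ring
    have e2 : (4:ℝ)/ε = 2/ε + 2/ε := by ring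
    linarith
  · rintro x ⟨hx1, hx2⟩
    have hP := hest x hx1 hx2
    have hd : (0:ℝ) < 1+ε/2 := by linarith
    have heval : q.eval x = (ε/4 + (x + P.eval x)/2) * (1/(1+ε/2)) := by
      rw [hq]
      simp [eval_mul, eval_add, eval_C, eval_X]
      ring
    have hr : max 0 x = (x + |x|)/2 := by
      rcases le_total 0 x with h | h
      · rw [max_eq_right h, abs_of_nonneg h]; ring
      · rw [max_eq_left h, abs_of_nonpos h]; ring
    set r := max 0 x with hrdef
    set w := (x + P.eval x)/2 with hw
    have hrw : |r - w| ≤ ε/4 := by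
      rw [hr, hw]
      rw [show (x + |x|)/2 - (x + P.eval x)/2 = (|x| - P.eval x)/2 by ring]
      rw [abs_div]
      rw [abs_of_nonneg (by norm_num : (0:ℝ) ≤ (2:ℝ))]
      have : |(|x|) - P.eval x| ≤ ε/2 := le_trans hP herr
      linarith
    have hr0 : 0 ≤ r := le_max_left _ _
    have hr1 : r ≤ 1 := max_le (by linarith) hx2
    set y := ε/4 + w with hy
    have hy1 : r ≤ y := by
      have := abs_le.mp hrw
      rw [hy]; linarith [this.2]
    have hy2 : y ≤ r + ε/2 := by
      have := abs_le.mp hrw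
      rw [hy]; linarith [this.1]
    have hz : q.eval x = y/(1+ε/2) := by rw [heval, hy]; ring
    have hy0 : 0 ≤ y := le_trans hr0 hy1
    have hzd : y/(1+ε/2) * (1+ε/2) = y := div_mul_cancel₀ _ hd.ne'
    have hz0 : 0 ≤ y/(1+ε/2) := div_nonneg hy0 hd.le
    have hzley : y/(1+ε/2) ≤ y := div_le_self hy0 (by linarith)
    constructor
    · rw [hz, abs_le]
      have h7 : r ≤ y/(1+ε/2) * (1+ε/2) := by rw [hzd]; exact hy1
      have h8 : y/(1+ε/2)*(ε/2) ≤ (r + ε/2)*(ε/2) :=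
        mul_le_mul_of_nonneg_right (le_trans hzley hy2) (by linarith)
      constructor
      · linarith
      · nlinarith [h7, h8, hr1, hε1, hε0.le,
          mul_le_mul_of_nonneg_right hr1 (le_of_lt hε0)]
    · rw [hz]
      refine ⟨hz0, ?_⟩
      rw [div_le_one hd]
      linarith
end

section
/- Let p(t) = Σ_{i=0}^{d} β_i t^i be a univariate real polynomial of degree d, and let M ≥ 0 satisfy max_{t ∈ [−1,1]} |p(t)| ≤ M. Then Σ_{i=0}^{d} β_i² ≤ (d + 1) · (4e)^{2d} · M², where e is Euler's number. -/
open Finset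

open Polynomial Nat



-- Coefficients of a product of monic linear factors with roots in [-1,1] are ≤ 2^card.
lemma aux_prod_linear_coeff (t : Finset ℕ) (b : ℕ → ℝ) (hb : ∀ j ∈ t, |b j| ≤ 1) :
    ∀ i, |(∏ j ∈ t, (X - C (b j))).coeff i| ≤ 2 ^ t.card := by
  induction t using Finset.induction_on with
  | empty =>
      intro i
      simp only [Finset.prod_empty, Polynomial.coeff_one, Finset.card_empty, pow_zero]
      split <;> norm_num
  | insert a t ha ih =>
      intro i
      rw [Finset.prod_insert ha, sub_mul, Finset.card_insert_of_notMem ha]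
      have hba : |b a| ≤ 1 := hb a (Finset.mem_insert_self a t)
      have ih' := ih (fun j hj => hb j (Finset.mem_insert_of_mem hj))
      set q := ∏ j ∈ t, (X - C (b j)) with hq
      have key : ∀ n, |(X * q - C (b a) * q).coeff n| ≤ 2 ^ (t.card + 1) := by
        intro n
        rw [Polynomial.coeff_sub, Polynomial.coeff_C_mul]
        have hXq : |(X * q).coeff n| ≤ 2 ^ t.card := by
          cases n with
          | zero => simp [Polynomial.mul_coeff_zero]
          | succ m => rw [Polynomial.coeff_X_mul]; exact ih' m
        calc |(X * q).coeff n - b a * q.coeff n|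
            ≤ |(X * q).coeff n| + |b a * q.coeff n| := abs_sub _ _
          _ ≤ 2 ^ t.card + 1 * 2 ^ t.card := by
              gcongr
              rw [abs_mul]
              exact mul_le_mul hba (ih' n) (abs_nonneg _) zero_le_one
          _ = 2 ^ (t.card + 1) := by ring
      exact key i

lemma aux_erase_split (d k : ℕ) (hk : k ≤ d) :
    (range (d+1)).erase k = range k ∪ Ico (k+1) (d+1) := by
  ext j
  simp only [mem_erase, mem_range, mem_union, mem_Ico]
  omega

lemma aux_prod_range_sub (k : ℕ) : ∏ j ∈ range k, (k - j) = k ! := by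
  induction k with
  | zero => simp
  | succ n ih =>
      rw [Finset.prod_range_succ']
      have h : ∀ j ∈ range n, n + 1 - (j+1) = n - j := fun j _ => by omega
      rw [Finset.prod_congr rfl h, ih, Nat.factorial_succ]
      simp [Nat.mul_comm]

lemma aux_node_prod (d k : ℕ) (hk : k ≤ d) :
    ∏ j ∈ (range (d+1)).erase k, |(k:ℝ) - (j:ℝ)| = (k ! : ℝ) * ((d-k)! : ℝ) := by
  rw [aux_erase_split d k hk, Finset.prod_union]
  · have h1 : ∏ j ∈ range k, |(k:ℝ) - (j:ℝ)| = (k ! : ℝ) := by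
      have e : ∀ j ∈ range k, |(k:ℝ) - (j:ℝ)| = ((k - j : ℕ) : ℝ) := by
        intro j hj
        simp only [mem_range] at hj
        rw [Nat.cast_sub hj.le, abs_of_nonneg (sub_nonneg.mpr (by exact_mod_cast hj.le))]
      rw [Finset.prod_congr rfl e, ← Nat.cast_prod, aux_prod_range_sub]
    have h2 : ∏ j ∈ Ico (k+1) (d+1), |(k:ℝ) - (j:ℝ)| = ((d-k)! : ℝ) := by
      rw [Finset.prod_Ico_eq_prod_range]
      have hd : d + 1 - (k + 1) = d - k := by omega
      rw [hd]
      have e : ∀ j ∈ range (d-k), |(k:ℝ) - ((k+1+j : ℕ):ℝ)| = ((j+1 : ℕ) : ℝ) := by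
        intro j _
        have h : ((k:ℝ) - ((k+1+j : ℕ):ℝ)) = -((j+1:ℕ):ℝ) := by push_cast; ring
        rw [h, abs_neg, abs_of_nonneg (by positivity)]
      rw [Finset.prod_congr rfl e, ← Nat.cast_prod, Finset.prod_range_add_one_eq_factorial]
    rw [h1, h2]
  · rw [Finset.disjoint_left]
    intro j hj hj'
    simp only [mem_range] at hj
    simp only [mem_Ico] at hj'
    omega

-- exp bound: d^d ≤ e^d * d!
lemma aux_pow_le_exp (d : ℕ) : (d:ℝ)^d ≤ Real.exp 1 ^ d * d ! := by
  have h1 : ((d:ℝ))^d / d ! ≤ Real.exp d := by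
    calc ((d:ℝ))^d / d ! ≤ ∑ i ∈ range (d+1), (d:ℝ)^i / i ! := by
          apply Finset.single_le_sum (f := fun i => (d:ℝ)^i / i !)
          · intro i _; positivity
          · simp
      _ ≤ Real.exp d := Real.sum_le_exp_of_nonneg (by positivity) _
  have h2 : Real.exp d = Real.exp 1 ^ d := by
    rw [← Real.exp_nat_mul]; norm_num
  have hf : (0:ℝ) < d ! := by exact_mod_cast Nat.factorial_pos d
  rw [div_le_iff₀ hf] at h1
  rw [← h2]; exact h1

lemma aux_sum_inv_factorial (d : ℕ) :
    ∑ k ∈ range (d+1), (1:ℝ)/(k ! * (d-k)!) = 2^d / d ! := by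
  have e : ∀ k ∈ range (d+1), (1:ℝ)/(k ! * (d-k)!) = (d.choose k : ℝ)/ d ! := by
    intro k hk
    simp only [mem_range] at hk
    have hk' : k ≤ d := by omega
    have hfact : (d.choose k : ℝ) * (k ! * (d-k)!) = (d ! : ℝ) := by
      exact_mod_cast congrArg (Nat.cast (R := ℝ))
        (by rw [← Nat.choose_mul_factorial_mul_factorial hk']; ring)
    have h1 : (0:ℝ) < k ! * (d-k)! := by positivity
    have h2 : (0:ℝ) < d ! := by positivity
    rw [div_eq_div_iff h1.ne' h2.ne', one_mul, ← hfact]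
  rw [Finset.sum_congr rfl e, ← Finset.sum_div]
  congr 1
  rw [← Nat.cast_sum, Nat.sum_range_choose]
  norm_num
lemma aux_basis_coeff (d k i : ℕ) (hd : 1 ≤ d) (hk : k ≤ d) :
    |(Lagrange.basis (range (d+1)) (fun j => (j:ℝ)/d) k).coeff i|
      ≤ (d:ℝ)^d / ((k)! * (d-k)!) * 2^d := by
  have hdR : (0:ℝ) < d := by exact_mod_cast hd
  set s := (range (d+1)).erase k with hs
  have hcard : s.card = d := by
    rw [hs, Finset.card_erase_of_mem (by simp [mem_range]; omega)]
    simp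
  have hsplit : Lagrange.basis (range (d+1)) (fun j => (j:ℝ)/d) k
      = C (∏ j ∈ s, ((k:ℝ)/d - (j:ℝ)/d)⁻¹) * ∏ j ∈ s, (X - C ((j:ℝ)/d)) := by
    rw [Lagrange.basis]
    simp only [Lagrange.basisDivisor]
    rw [Finset.prod_mul_distrib, map_prod]
  rw [hsplit, Polynomial.coeff_C_mul, abs_mul]
  have habs : ∀ j ∈ s, |(j:ℝ)/d| ≤ 1 := by
    intro j hj
    have : j ∈ range (d+1) := Finset.mem_of_mem_erase hj
    simp only [mem_range] at this
    rw [abs_div, abs_of_nonneg (by positivity : (0:ℝ) ≤ (j:ℝ)), abs_of_pos hdR,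
      div_le_one hdR]
    exact_mod_cast by omega
  have hlin := aux_prod_linear_coeff s (fun j => (j:ℝ)/d) habs i
  rw [hcard] at hlin
  have hCabs : |∏ j ∈ s, ((k:ℝ)/d - (j:ℝ)/d)⁻¹| = (d:ℝ)^d / ((k)! * (d-k)!) := by
    rw [Finset.abs_prod]
    have e : ∀ j ∈ s, |((k:ℝ)/d - (j:ℝ)/d)⁻¹| = ((k:ℝ) - (j:ℝ) |> abs)⁻¹ * d := by
      intro j _
      rw [abs_inv, div_sub_div_same, abs_div, abs_of_pos hdR, inv_div, div_eq_mul_inv]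
      ring
    rw [Finset.prod_congr rfl e, Finset.prod_mul_distrib, Finset.prod_inv_distrib,
      aux_node_prod d k hk, Finset.prod_const, hcard]
    rw [inv_eq_one_div]
    ring
  rw [hCabs]
  have h1 : (0:ℝ) ≤ (d:ℝ)^d / ((k)! * (d-k)!) := by positivity
  exact mul_le_mul_of_nonneg_left hlin h1

/-- Let `p(t) = Σ_{i=0}^{d} β_i t^i` and `M ≥ 0` satisfy
`max_{t ∈ [−1,1]} |p(t)| ≤ M`.  Then `Σ_{i=0}^{d} β_i² ≤ (d+1)·(4e)^{2d}·M²`. -/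
theorem coeff_bound_of_bounded_on_interval (d : ℕ) (β : ℕ → ℝ) (M : ℝ) (hM : 0 ≤ M)
    (hbound : ∀ t ∈ Set.Icc (-1 : ℝ) 1, |∑ i ∈ range (d + 1), β i * t ^ i| ≤ M) :
    ∑ i ∈ range (d + 1), (β i) ^ 2 ≤ (d + 1) * (4 * Real.exp 1) ^ (2 * d) * M ^ 2 := by
  -- main claim: each |β n| ≤ (4 e)^d * M for n ≤ d
  have key : ∀ n ∈ range (d+1), |β n| ≤ (4 * Real.exp 1) ^ d * M := by
    rcases Nat.eq_zero_or_pos d with hd0 | hd1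
    · subst hd0
      intro n hn
      simp only [mem_range] at hn
      obtain rfl : n = 0 := by omega
      have h0 := hbound 0 (by constructor <;> norm_num)
      simp at h0
      simpa using h0
    · -- d ≥ 1 : Lagrange interpolation at nodes k/d
      set v : ℕ → ℝ := fun j => (j:ℝ)/d with hv
      have hdR : (0:ℝ) < d := by exact_mod_cast hd1
      have hinj : Set.InjOn v (range (d+1)) := by
        intro a _ b _ h
        simp only [hv] at h
        field_simp at h
        exact_mod_cast h
      set P : ℝ[X] := ∑ i ∈ range (d+1), C (β i) * X ^ i with hP
      have hdeg : P.degree < ((range (d+1)).card : ℕ) := by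
        rw [Finset.card_range]
        apply lt_of_le_of_lt (Polynomial.degree_sum_le _ _)
        rw [Finset.sup_lt_iff (by exact_mod_cast WithBot.bot_lt_coe (d+1))]
        intro i hi
        simp only [mem_range] at hi
        exact lt_of_le_of_lt (Polynomial.degree_C_mul_X_pow_le i (β i)) (by exact_mod_cast hi)
      have hcoeff : ∀ n ∈ range (d+1), P.coeff n = β n := by
        intro n hn
        rw [hP, Polynomial.finset_sum_coeff]
        simp only [Polynomial.coeff_C_mul, Polynomial.coeff_X_pow, mul_ite, mul_one, mul_zero]
        rw [Finset.sum_ite_eq (range (d+1)) n β]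
        simp [hn]
      have heval : ∀ t : ℝ, P.eval t = ∑ i ∈ range (d+1), β i * t ^ i := by
        intro t
        rw [hP, Polynomial.eval_finset_sum]
        simp
      have hinterp := Lagrange.eq_interpolate (f := P) hinj hdeg
      intro n hn
      have hcn : β n = ∑ k ∈ range (d+1), P.eval (v k) * (Lagrange.basis (range (d+1)) v k).coeff n := by
        rw [← hcoeff n hn]
        conv_lhs => rw [hinterp]
        rw [Lagrange.interpolate_apply, Polynomial.finset_sum_coeff]
        apply Finset.sum_congr rfl
        intro k _
        rw [Polynomial.coeff_C_mul]
      have hnode : ∀ k ∈ range (d+1), |P.eval (v k)| ≤ M := by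
        intro k hk
        simp only [mem_range] at hk
        rw [heval]
        apply hbound
        constructor
        · have : (0:ℝ) ≤ v k := by positivity
          linarith
        · rw [hv]
          simp only
          rw [div_le_one hdR]
          exact_mod_cast by omega
      calc |β n| ≤ ∑ k ∈ range (d+1), |P.eval (v k)| * |(Lagrange.basis (range (d+1)) v k).coeff n| := by
            rw [hcn]
            refine (Finset.abs_sum_le_sum_abs _ _).trans ?_
            apply Finset.sum_le_sum
            intro k _
            rw [abs_mul]
        _ ≤ ∑ k ∈ range (d+1), M * ((d:ℝ)^d / ((k)! * (d-k)!) * 2^d) := by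
            apply Finset.sum_le_sum
            intro k hk
            simp only [mem_range] at hk
            exact mul_le_mul (hnode k (by simp [mem_range]; omega))
              (aux_basis_coeff d k n hd1 (by omega)) (abs_nonneg _) hM
        _ = M * 2^d * (d:ℝ)^d * ∑ k ∈ range (d+1), (1:ℝ)/((k)! * (d-k)!) := by
            rw [Finset.mul_sum]
            apply Finset.sum_congr rfl
            intro k _
            ring
        _ = M * 2^d * (d:ℝ)^d * (2^d / d !) := by rw [aux_sum_inv_factorial]
        _ ≤ M * 2^d * (Real.exp 1 ^ d * d !) * (2^d / d !) := by
            have hf : (0:ℝ) < d ! := by exact_mod_cast Nat.factorial_pos d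
            have h2 : (0:ℝ) ≤ M * 2^d := by positivity
            gcongr
            exact aux_pow_le_exp d
        _ = (4 * Real.exp 1) ^ d * M := by
            have hf : (0:ℝ) < d ! := by exact_mod_cast Nat.factorial_pos d
            have h4 : (4:ℝ) * Real.exp 1 = 2 * 2 * Real.exp 1 := by norm_num
            rw [h4, mul_pow, mul_pow]
            field_simp
  -- sum up
  have hterm : ∀ n ∈ range (d+1), (β n)^2 ≤ (4 * Real.exp 1) ^ (2*d) * M^2 := by
    intro n hn
    have h1 := key n hn
    have h2 : (β n)^2 = |β n|^2 := (sq_abs _).symm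
    rw [h2]
    calc |β n|^2 ≤ ((4 * Real.exp 1) ^ d * M)^2 := by
          apply pow_le_pow_left₀ (abs_nonneg _) h1
      _ = (4 * Real.exp 1) ^ (2*d) * M^2 := by rw [mul_pow, ← pow_mul, mul_comm d 2]
  calc ∑ i ∈ range (d+1), (β i)^2 ≤ ∑ i ∈ range (d+1), (4 * Real.exp 1) ^ (2*d) * M^2 :=
        Finset.sum_le_sum hterm
    _ = (d + 1) * (4 * Real.exp 1) ^ (2 * d) * M ^ 2 := by
        rw [Finset.sum_const, Finset.card_range, nsmul_eq_mul]
        push_cast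
        ring
end

section
/- Under the hypotheses of the approximate polynomial network theorem (σ 1-Lipschitz; p a polynomial with |σ(t) − p(t)| ≤ ε/(W^D · D) on [−2M, 2M]; ε ∈ (0,1), M ≥ 1, W ≥ 1; weights of N satisfying ‖w_j^(0)‖₂ ≤ M, ‖w_j^(i)‖₁ ≤ W for 1 ≤ i ≤ D, and h_j^(l)(x) ∈ [−M, M] for all x ∈ S^{n−1} and l < D), let h̄_j^(i) denote the pre-activation values of the network N̄ with the same weights and activation p. Then for every layer index i ∈ {0,…,D}, every unit j of that layer, and every x ∈ S^{n−1}: |h_j^(i)(x) − h̄_j^(i)(x)| ≤ i·ε/(W^{D−i} · D), and consequently |h̄_j^(i)(x)| ≤ 2M for i ≤ D − 1. -/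
open Finset

/-- Pre-activation values of a fully-connected feedforward network with
activation `σ`, layer widths `width`, and weights `w` (where `w i j k` is the
weight of the edge from unit `k` of layer `i` to unit `j` of layer `i+1`):
`preact σ width w i j x = h_j^(i)(x)`, the input of unit `j` in layer `i+1`. -/
noncomputable def preact (σ : ℝ → ℝ) (width : ℕ → ℕ)
    (w : (i : ℕ) → Fin (width (i + 1)) → Fin (width i) → ℝ) :
    (i : ℕ) → Fin (width (i + 1)) → (Fin (width 0) → ℝ) → ℝ
  | 0, j, x => ∑ k, w 0 j k * x k
  | (i + 1), j, x => ∑ k, w (i + 1) j k * σ (preact σ width w i k x)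

/-- Layer-by-layer error bound for approximate polynomial networks: under the
hypotheses of the approximate-polynomial-network theorem, the pre-activations
`h_j^(i)` of the original network and `h̄_j^(i)` of the polynomial network
satisfy `|h_j^(i)(x) − h̄_j^(i)(x)| ≤ i·ε/(W^{D−i}·D)` on the unit sphere, and
consequently `|h̄_j^(i)(x)| ≤ 2M` for `i ≤ D − 1`. -/
theorem approx_poly_network_layerwise (ε M W : ℝ) (D : ℕ)
    (hε : ε ∈ Set.Ioo (0 : ℝ) 1) (hM : 1 ≤ M) (hW : 1 ≤ W) (hD : 1 ≤ D)
    (σ : ℝ → ℝ) (hσ : LipschitzWith 1 σ)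
    (P : Polynomial ℝ)
    (happrox : ∀ t ∈ Set.Icc (-(2 * M)) (2 * M),
      |σ t - P.eval t| ≤ ε / (W ^ D * (D : ℝ)))
    (width : ℕ → ℕ)
    (w : (i : ℕ) → Fin (width (i + 1)) → Fin (width i) → ℝ)
    (hw0 : ∀ j : Fin (width 1), Real.sqrt (∑ k, (w 0 j k) ^ 2) ≤ M)
    (hwi : ∀ i : ℕ, 1 ≤ i → i ≤ D → ∀ j : Fin (width (i + 1)), (∑ k, |w i j k|) ≤ W)
    (hpre : ∀ l : ℕ, l < D → ∀ j : Fin (width (l + 1)),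
      ∀ x : Fin (width 0) → ℝ, (∑ k, (x k) ^ 2) = 1 →
        preact σ width w l j x ∈ Set.Icc (-M) M) :
    ∀ i : ℕ, i ≤ D → ∀ j : Fin (width (i + 1)),
      ∀ x : Fin (width 0) → ℝ, (∑ k, (x k) ^ 2) = 1 →
        |preact σ width w i j x - preact (fun t => P.eval t) width w i j x|
            ≤ (i : ℝ) * ε / (W ^ (D - i) * (D : ℝ))
        ∧ (i + 1 ≤ D → |preact (fun t => P.eval t) width w i j x| ≤ 2 * M) := by
  obtain ⟨hε0, hε1⟩ := hε
  have hWpos : (0:ℝ) < W := lt_of_lt_of_le one_pos hW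
  have hDpos : (0:ℝ) < (D:ℝ) := by exact_mod_cast hD
  intro i
  induction i with
  | zero =>
    intro _ j x hx
    have heq : preact (fun t => P.eval t) width w 0 j x = preact σ width w 0 j x := by
      simp [preact]
    constructor
    · simp [preact, heq]
    · intro _
      rw [heq]
      obtain ⟨hl, hr⟩ := hpre 0 hD j x hx
      rw [abs_le]
      constructor <;> linarith
  | succ i ih =>
    intro hiD j x hx
    have hi : i ≤ D := by omega
    have hm : D - i = (D - (i+1)) + 1 := by omega
    set m := D - (i + 1) with hmdef
    have hWm : (0:ℝ) < W ^ m := pow_pos hWpos m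
    have hWD : (0:ℝ) < W ^ D := pow_pos hWpos D
    have hWm1 : (0:ℝ) < W ^ (m+1) := pow_pos hWpos (m+1)
    have key : ∀ k : Fin (width (i+1)),
        |σ (preact σ width w i k x) - P.eval (preact (fun t => P.eval t) width w i k x)| ≤
          (i : ℝ) * ε / (W ^ (D - i) * D) + ε / (W ^ D * D) := by
      intro k
      obtain ⟨hdiff, hbar⟩ := ih hi k x hx
      have hbar2 := hbar hiD
      have h1 : |σ (preact σ width w i k x) - σ (preact (fun t => P.eval t) width w i k x)| ≤
          |preact σ width w i k x - preact (fun t => P.eval t) width w i k x| := by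
        have := hσ.dist_le_mul (preact σ width w i k x)
          (preact (fun t => P.eval t) width w i k x)
        simpa [Real.dist_eq] using this
      obtain ⟨hb1, hb2⟩ := abs_le.mp hbar2
      have h2 := happrox (preact (fun t => P.eval t) width w i k x)
        (Set.mem_Icc.mpr ⟨by linarith, by linarith⟩)
      calc |σ (preact σ width w i k x) - P.eval (preact (fun t => P.eval t) width w i k x)|
          ≤ |σ (preact σ width w i k x) - σ (preact (fun t => P.eval t) width w i k x)|
            + |σ (preact (fun t => P.eval t) width w i k x)
              - P.eval (preact (fun t => P.eval t) width w i k x)| := abs_sub_le _ _ _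
        _ ≤ (i : ℝ) * ε / (W ^ (D - i) * D) + ε / (W ^ D * D) := by
            have := h1.trans hdiff
            linarith
    have hBnn : (0:ℝ) ≤ (i : ℝ) * ε / (W ^ (D - i) * D) + ε / (W ^ D * D) := by
      have : (0:ℝ) ≤ (i:ℝ) * ε / (W ^ (D - i) * D) := by positivity
      have : (0:ℝ) ≤ ε / (W ^ D * D) := by positivity
      positivity
    have step : |preact σ width w (i+1) j x - preact (fun t => P.eval t) width w (i+1) j x|
        ≤ (∑ k, |w (i+1) j k|) * ((i : ℝ) * ε / (W ^ (D - i) * D) + ε / (W ^ D * D)) := by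
      show |(∑ k, w (i+1) j k * σ (preact σ width w i k x)) -
          (∑ k, w (i+1) j k * P.eval (preact (fun t => P.eval t) width w i k x))| ≤ _
      rw [← Finset.sum_sub_distrib]
      refine (Finset.abs_sum_le_sum_abs _ _).trans ?_
      rw [Finset.sum_mul]
      apply Finset.sum_le_sum
      intro k _
      rw [← mul_sub, abs_mul]
      exact mul_le_mul_of_nonneg_left (key k) (abs_nonneg _)
    have hwsum : (∑ k, |w (i+1) j k|) ≤ W := hwi (i+1) (by omega) hiD j
    have step2 : |preact σ width w (i+1) j x - preact (fun t => P.eval t) width w (i+1) j x|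
        ≤ W * ((i : ℝ) * ε / (W ^ (D - i) * D) + ε / (W ^ D * D)) :=
      step.trans (mul_le_mul_of_nonneg_right hwsum hBnn)
    have hfinal : W * ((i : ℝ) * ε / (W ^ (D - i) * D) + ε / (W ^ D * D))
        ≤ ((i:ℕ)+1 : ℝ) * ε / (W ^ m * D) := by
      rw [hm]
      have e1 : W * ((i : ℝ) * ε / (W ^ (m+1) * D)) = (i : ℝ) * ε / (W ^ m * D) := by
        rw [pow_succ]
        field_simp
      have e2 : W * (ε / (W ^ D * D)) ≤ ε / (W ^ m * D) := by
        rw [mul_div_assoc']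
        rw [div_le_div_iff₀ (by positivity) (by positivity)]
        have hpow : W ^ (m+1) ≤ W ^ D := pow_le_pow_right₀ hW (by omega)
        have hεD : (0:ℝ) ≤ ε * (D:ℝ) := by positivity
        nlinarith [mul_le_mul_of_nonneg_left hpow hεD, pow_succ W m]
      have e3 : ((i:ℕ)+1 : ℝ) * ε / (W ^ m * D)
          = (i : ℝ) * ε / (W ^ m * D) + ε / (W ^ m * D) := by
        field_simp
      rw [mul_add, e1, e3]
      linarith
    have hmain : |preact σ width w (i+1) j x - preact (fun t => P.eval t) width w (i+1) j x|
        ≤ ((i:ℕ)+1 : ℝ) * ε / (W ^ m * D) := step2.trans hfinal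
    refine ⟨by exact_mod_cast hmain, ?_⟩
    intro h2D
    obtain ⟨hl, hr⟩ := hpre (i+1) (by omega) j x hx
    have hsmall : ((i:ℕ)+1 : ℝ) * ε / (W ^ m * D) ≤ 1 := by
      rw [div_le_one (by positivity)]
      have h1 : ((i:ℕ)+1 : ℝ) ≤ (D:ℝ) := by exact_mod_cast hiD
      have h2 : (1:ℝ) ≤ W ^ m := one_le_pow₀ hW
      nlinarith
    have := abs_sub_abs_le_abs_sub (preact (fun t => P.eval t) width w (i+1) j x)
      (preact σ width w (i+1) j x)
    rw [abs_sub_comm] at this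
    have habs : |preact σ width w (i+1) j x| ≤ M := abs_le.mpr ⟨hl, hr⟩
    linarith [hmain, hsmall, habs, this]
end
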